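/- If f(η) = (λ/2) η² - (λ²/(2·5!)) η^5 + Σ_{n≥6} C_n η^n is a formal power series solution of the Blasius equation, then C_6 = C_7 = 0 and C_8 = 11 λ³/(4·8!). -/

import Mathlib

/-- For the formal power series solution f(η) = (λ/2)η² - (λ²/(2·5!))η⁵ + Σ_{n≥6} C_n η^n of
the Blasius equation, one has C_6 = C_7 = 0 and C_8 = 11λ³/(4·8!). -/
theorem blasius_series_coefficients_second (C : ℕ → ℝ) (lam : ℝ)
    (h0 : C 0 = 0) (h1 : C 1 = 0) (h2 : C 2 = lam / 2)
    (h3 : C 3 = 0) (h4 : C 4 = 0) (h5 : C 5 = -lam ^ 2 / (2 * 120))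
    (hrec : ∀ k : ℕ,
      ((k : ℝ) + 1) * ((k : ℝ) + 2) * ((k : ℝ) + 3) * C (k + 3)
        + (1 / 2) * ∑ p ∈ Finset.HasAntidiagonal.antidiagonal k,
            C p.1 * (((p.2 : ℝ) + 1) * ((p.2 : ℝ) + 2) * C (p.2 + 2)) = 0) :
    C 6 = 0 ∧ C 7 = 0 ∧ C 8 = 11 * lam ^ 3 / (4 * 40320) := by
  have e3 := hrec 3
  have e4 := hrec 4
  have e5 := hrec 5
  simp [Finset.Nat.sum_antidiagonal_eq_sum_range_succ_mk, Finset.sum_range_succ,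
    h0, h1, h2, h3, h4, h5] at e3 e4 e5
  norm_num at e3 e4 e5
  refine ⟨e3, e4, by nlinarith [e5]⟩
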